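/- Let I be a finite nonempty set of items, p and q probability distributions on I with q(y) > 0 for all y, π_ref a positive function on I, and β > 0. Define for a probability distribution π on I the loss L(π) = -Σ_{y_w} Σ_{y_l} p(y_w) q(y_l) · log σ(β·log(π(y_w)/π_ref(y_w)) − β·log(π(y_l)/π_ref(y_l))), where σ(z) = 1/(1+e^{−z}). Then the distribution π*(y) ∝ π_ref(y)·(p(y)/q(y))^{1/β} is a critical point of L over the probability simplex (i.e., the gradient of L at π* is constant across coordinates where π* > 0). -/

import Mathlib

private lemma logsig_hasDerivAt (z0 : ℝ) :
    HasDerivAt (fun z => Real.log (1 / (1 + Real.exp (-z))))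
      (Real.exp (-z0) / (1 + Real.exp (-z0))) z0 := by
  have hpos : (0:ℝ) < 1 + Real.exp (-z0) := by positivity
  have h1 : HasDerivAt (fun z : ℝ => 1 + Real.exp (-z)) (-Real.exp (-z0)) z0 := by
    simpa using (((hasDerivAt_id z0).neg).exp.const_add 1)
  have h2 := (h1.log (ne_of_gt hpos)).fun_neg
  simp only [one_div, Real.log_inv]
  refine h2.congr_deriv ?_
  ring

theorem stmt_0 {I : Type*} [Fintype I] [Nonempty I] [DecidableEq I]
    (p q πref : I → ℝ) (β : ℝ)
    (hp : ∀ y, 0 < p y) (hpsum : ∑ y, p y = 1)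
    (hq : ∀ y, 0 < q y) (hqsum : ∑ y, q y = 1)
    (href : ∀ y, 0 < πref y) (hβ : 0 < β) :
    let σ : ℝ → ℝ := fun z => 1 / (1 + Real.exp (-z))
    let L : (I → ℝ) → ℝ := fun π =>
      -∑ yw, ∑ yl, p yw * q yl *
        Real.log (σ (β * Real.log (π yw / πref yw) - β * Real.log (π yl / πref yl)))
    let Z : ℝ := ∑ z, πref z * (p z / q z) ^ (1 / β)
    let πs : I → ℝ := fun y => πref y * (p y / q y) ^ (1 / β) / Z
    ∃ c : ℝ, ∀ y, 0 < πs y →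
      HasDerivAt (fun t => L (Function.update πs y t)) c (πs y) := by
  classical
  intro σ L Z πs
  have hβ' : β ≠ 0 := ne_of_gt hβ
  have hr : ∀ w, 0 < p w / q w := fun w => div_pos (hp w) (hq w)
  have hZ : 0 < Z := by
    have : ∀ z ∈ (Finset.univ : Finset I), 0 < πref z * (p z / q z) ^ (1 / β) := by
      intro z _
      exact mul_pos (href z) (Real.rpow_pos_of_pos (div_pos (hp z) (hq z)) _)
    exact Finset.sum_pos this Finset.univ_nonempty
  have hπs : ∀ w, 0 < πs w := fun w => by
    show 0 < πref w * (p w / q w) ^ (1 / β) / Z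
    exact div_pos (mul_pos (href w) (Real.rpow_pos_of_pos (hr w) _)) hZ
  have hzv : ∀ w, β * Real.log (πs w / πref w)
      = Real.log (p w / q w) - β * Real.log Z := by
    intro w
    have h1 : πs w / πref w = (p w / q w) ^ (1 / β) / Z := by
      show πref w * (p w / q w) ^ (1 / β) / Z / πref w = _
      field_simp [(href w).ne']
    rw [h1, Real.log_div (Real.rpow_pos_of_pos (hr w) _).ne' (ne_of_gt hZ),
      Real.log_rpow (hr w)]
    field_simp
  refine ⟨0, fun y hy => ?_⟩
  show HasDerivAt (fun t => -∑ yw, ∑ yl, p yw * q yl *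
      Real.log (1 / (1 + Real.exp (-(β * Real.log (Function.update πs y t yw / πref yw)
        - β * Real.log (Function.update πs y t yl / πref yl)))))) 0 (πs y)
  set t0 := πs y with ht0def
  have ht0 : 0 < t0 := hy
  -- per-coordinate derivative
  have hcoord : ∀ w, HasDerivAt
      (fun t => Real.log (Function.update πs y t w / πref w))
      (if w = y then 1 / t0 else 0) t0 := by
    intro w
    by_cases hw : w = y
    · subst hw
      simp only [Function.update_self, if_pos rfl]
      have h1 : HasDerivAt (fun t : ℝ => t / πref w) (1 / πref w) t0 :=
        (hasDerivAt_id t0).div_const _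
      have h2 := h1.log (div_pos ht0 (href w)).ne'
      convert h2 using 1
      rw [div_div_div_cancel_right₀ (href w).ne']
      simp
    · simp only [Function.update_of_ne hw, if_neg hw]
      exact hasDerivAt_const t0 _
  have hinner : ∀ w l, HasDerivAt
      (fun t => β * Real.log (Function.update πs y t w / πref w)
        - β * Real.log (Function.update πs y t l / πref l))
      (β * (if w = y then 1 / t0 else 0) - β * (if l = y then 1 / t0 else 0)) t0 :=
    fun w l => ((hcoord w).const_mul β).sub ((hcoord l).const_mul β)
  -- notation
  set a : I → ℝ := fun w => if w = y then 1 / t0 else 0 with hadef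
  set zv : I → I → ℝ := fun w l => Real.log (p w / q w) - Real.log (p l / q l) with hzvdef
  set E : I → I → ℝ := fun w l => Real.exp (-(zv w l)) with hEdef
  have hEval : ∀ w l, E w l = (p l / q l) / (p w / q w) := by
    intro w l
    show Real.exp (-(Real.log (p w / q w) - Real.log (p l / q l))) = _
    rw [neg_sub, Real.exp_sub, Real.exp_log (hr l), Real.exp_log (hr w)]
  have hEpos : ∀ w l, 0 < E w l := fun w l => Real.exp_pos _
  -- value of the inner expression at t0
  have hval : ∀ w l, (β * Real.log (Function.update πs y t0 w / πref w)
      - β * Real.log (Function.update πs y t0 l / πref l)) = zv w l := by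
    intro w l
    rw [ht0def, Function.update_eq_self, hzv w, hzv l, hzvdef]
    ring
  -- per-pair derivative
  have hpair : ∀ w l, HasDerivAt
      (fun t => p w * q l * Real.log (1 / (1 + Real.exp
        (-(β * Real.log (Function.update πs y t w / πref w)
          - β * Real.log (Function.update πs y t l / πref l))))))
      (p w * q l * (E w l / (1 + E w l) * (β * a w - β * a l))) t0 := by
    intro w l
    have hcomp := ((logsig_hasDerivAt _).comp t0 (hinner w l)).const_mul (p w * q l)
    rw [hval w l] at hcomp
    exact hcomp
  have hsum : HasDerivAt
      (fun t => -∑ yw, ∑ yl, p yw * q yl *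
        Real.log (1 / (1 + Real.exp (-(β * Real.log (Function.update πs y t yw / πref yw)
          - β * Real.log (Function.update πs y t yl / πref yl))))))
      (-∑ w, ∑ l, p w * q l * (E w l / (1 + E w l) * (β * a w - β * a l))) t0 := by
    exact (HasDerivAt.fun_sum fun w _ => HasDerivAt.fun_sum fun l _ => hpair w l).neg
  -- the derivative is zero
  have hT : ∀ w l, p w * q l * (E w l / (1 + E w l))
      = p w * p l / (p w / q w + p l / q l) := by
    intro w l
    rw [hEval]
    have hA0 : 0 < p w / q w := hr w
    have hB0 : 0 < p l / q l := hr l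
    have h3 : (1 : ℝ) + (p l / q l) / (p w / q w)
        = (p w / q w + p l / q l) / (p w / q w) := by
      rw [add_div, div_self hA0.ne']
    have hqlB : q l * (p l / q l) = p l := by
      rw [mul_comm, div_mul_cancel₀ _ (hq l).ne']
    calc p w * q l * ((p l / q l) / (p w / q w) / (1 + (p l / q l) / (p w / q w)))
        = p w * q l * ((p l / q l) / (p w / q w + p l / q l)) := by
          rw [h3, div_div_div_cancel_right₀ hA0.ne']
      _ = p w * (q l * (p l / q l)) / (p w / q w + p l / q l) := by ring
      _ = p w * p l / (p w / q w + p l / q l) := by rw [hqlB]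
  have hD0 : ∑ w, ∑ l, p w * q l * (E w l / (1 + E w l) * (β * a w - β * a l)) = 0 := by
    have hsplit : ∀ w l, p w * q l * (E w l / (1 + E w l) * (β * a w - β * a l))
        = (p w * q l * (E w l / (1 + E w l))) * (β * a w)
          - (p w * q l * (E w l / (1 + E w l))) * (β * a l) := by
      intro w l; ring
    simp only [hsplit, Finset.sum_sub_distrib]
    have hswap : ∑ w, ∑ l, (p w * q l * (E w l / (1 + E w l))) * (β * a l)
        = ∑ w, ∑ l, (p w * q l * (E w l / (1 + E w l))) * (β * a w) := by
      rw [Finset.sum_comm]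
      refine Finset.sum_congr rfl fun w _ => Finset.sum_congr rfl fun l _ => ?_
      rw [hT, hT]
      ring
    rw [hswap, sub_self]
  rw [← neg_zero, ← hD0]
  exact hsum
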